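/- arXiv:1607.04370 — 2 statements merged into one kernel-verified Lean document; each statement's English description precedes it below -/
import Mathlib

section
/- Assume the Strong Reflection Principle (SRP). Then the non-stationary ideal on ω₁ is saturated; that is, there does not exist a family {A_α : α < ω₂} of stationary subsets of ω₁ such that A_α ∩ A_β is non-stationary for every α ≠ β < ω₂. -/
universe u

/-- The first uncountable ordinal, `ω₁`. -/
noncomputable def omega1 : Ordinal.{u} := (Cardinal.aleph 1).ord

/-- `C` is club (closed unbounded) in `[A]^{<ω₁}`, the collection of countable subsets of `A`:
every member of `C` is a countable subset of `A`, every countable subset of `A` is included in a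
member of `C` (cofinality), and `C` is closed under unions of countable increasing chains. -/
def ClubOn {X : Type u} (A : Set X) (C : Set (Set X)) : Prop :=
  (∀ c ∈ C, c ⊆ A ∧ c.Countable) ∧
  (∀ s : Set X, s ⊆ A → s.Countable → ∃ c ∈ C, s ⊆ c) ∧
  (∀ f : ℕ → Set X, (∀ n, f n ∈ C) → Monotone f → (⋃ n, f n) ∈ C)

/-- `S` is stationary in `[A]^{<ω₁}`: it meets every club. -/
def StationaryOn {X : Type u} (A : Set X) (S : Set (Set X)) : Prop :=
  ∀ C, ClubOn A C → (S ∩ C).Nonempty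

/-- `C` is a club (closed unbounded set) of ordinals below `κ`:
`C ⊆ κ`, `C` is unbounded in `κ`, and `C` contains each of its limit points below `κ`. -/
def OrdClub (κ : Ordinal.{u}) (C : Set Ordinal.{u}) : Prop :=
  C ⊆ Set.Iio κ ∧ (∀ o < κ, ∃ c ∈ C, o ≤ c) ∧
  (∀ o < κ, o ≠ 0 → (∀ b < o, ∃ c ∈ C, b < c ∧ c < o) → o ∈ C)

/-- `S` is a stationary set of ordinals below `κ`: it meets every club below `κ`. -/
def OrdStationary (κ : Ordinal.{u}) (S : Set Ordinal.{u}) : Prop :=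
  S ⊆ Set.Iio κ ∧ ∀ C, OrdClub κ C → (S ∩ C).Nonempty

/-- The Strong Reflection Principle (SRP): suppose `λ ≥ ℵ₂` and `Z ⊆ P_{ω₁}(λ)` is such that
for each stationary `T ⊆ ω₁` the set `{σ ∈ Z : σ ∩ ω₁ ∈ T}` is stationary in `P_{ω₁}(λ)`;
then for every `X ⊆ λ` of cardinality `ℵ₁` there is `Y ⊆ λ` with `X ⊆ Y`, `|Y| = ℵ₁`,
and `Z ∩ P_{ω₁}(Y)` containing a club of `P_{ω₁}(Y)`.  (Here `λ` is identified with the set of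
ordinals below `λ.ord`, and `σ ∩ ω₁ ∈ T` means that `σ ∩ ω₁` is an ordinal `δ ∈ T`, i.e.
`σ ∩ ω₁ = Iio δ`.) -/
def SRP : Prop :=
  ∀ lam : Cardinal.{u}, Cardinal.aleph 2 ≤ lam →
    ∀ Z : Set (Set Ordinal.{u}),
      (∀ σ ∈ Z, σ ⊆ Set.Iio lam.ord ∧ σ.Countable) →
      (∀ T : Set Ordinal.{u}, OrdStationary omega1 T →
        StationaryOn (Set.Iio lam.ord)
          {σ ∈ Z | ∃ δ ∈ T, σ ∩ Set.Iio omega1 = Set.Iio δ}) →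
      ∀ X : Set Ordinal.{u}, X ⊆ Set.Iio lam.ord → Cardinal.mk X = Cardinal.aleph 1 →
        ∃ Y : Set Ordinal.{u}, X ⊆ Y ∧ Y ⊆ Set.Iio lam.ord ∧
          Cardinal.mk Y = Cardinal.aleph 1 ∧ ∃ D ⊆ Z, ClubOn Y D


namespace SRPaux
open Cardinal Set Ordinal

theorem omega1_isLimit : Order.IsSuccLimit omega1.{u} :=
  Cardinal.isSuccLimit_ord (Cardinal.aleph0_le_aleph 1)

theorem lift_aleph_one : Cardinal.lift.{u+1, u} (Cardinal.aleph 1) = Cardinal.aleph 1 := by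
  rw [Cardinal.lift_aleph, Ordinal.lift_one]

theorem mk_lt_aleph1_of_lt {ξ : Ordinal.{u}} (h : ξ < omega1) :
    Cardinal.mk (Set.Iio ξ) < Cardinal.aleph 1 := by
  rw [Ordinal.mk_Iio_ordinal, ← lift_aleph_one, Cardinal.lift_lt]
  exact Cardinal.lt_ord.1 h

theorem countable_Iio {ξ : Ordinal.{u}} (h : ξ < omega1) : (Set.Iio ξ).Countable := by
  rw [Cardinal.countable_iff_lt_aleph_one]
  exact mk_lt_aleph1_of_lt h

theorem countable_of_subset_Iio_omega1 {s : Set Ordinal.{u}} (hs : s ⊆ Set.Iio omega1)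
    (hξ : ∃ ξ < omega1.{u}, s ⊆ Set.Iio ξ) : s.Countable := by
  obtain ⟨ξ, h1, h2⟩ := hξ
  exact (countable_Iio h1).mono h2

/-- key regularity lemma: countable set of ordinals `< ω₁` is bounded strictly below `ω₁`. -/
theorem bounded_of_countable {s : Set Ordinal.{u}} (hs : s ⊆ Set.Iio omega1)
    (hc : s.Countable) : ∃ b < omega1.{u}, ∀ x ∈ s, x ≤ b := by
  rcases s.eq_empty_or_nonempty with rfl | hne
  · exact ⟨0, omega1_isLimit.pos, by simp⟩
  · obtain ⟨f, rfl⟩ := hc.exists_eq_range hne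
    refine ⟨iSup f, ?_, fun x hx => ?_⟩
    · refine Ordinal.iSup_lt_ord_lift ?_ (fun i => hs (Set.mem_range_self i))
      rw [show omega1.{u} = (Cardinal.aleph 1).ord from rfl, Cardinal.isRegular_aleph_one.cof_eq, Cardinal.mk_nat, Cardinal.lift_aleph0]
      exact Cardinal.aleph0_lt_aleph_one
    · obtain ⟨i, rfl⟩ := hx
      exact le_ciSup (Ordinal.bddAbove_range f) i

end SRPaux
namespace SRPaux

theorem exists_strict_bound {s : Set Ordinal.{u}} (hs : s ⊆ Set.Iio omega1)
    (hc : s.Countable) : ∃ b < omega1.{u}, ∀ x ∈ s, x < b := by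
  obtain ⟨b, hb, hball⟩ := bounded_of_countable hs hc
  exact ⟨b + 1, omega1_isLimit.succ_lt hb, fun x hx => lt_of_le_of_lt (hball x hx)
    (Order.lt_succ b)⟩

theorem exists_step (H : Ordinal.{u} → Ordinal.{u} → Ordinal.{u})
    (hH : ∀ η < omega1.{u}, ∀ ξ < omega1.{u}, H η ξ < omega1) {β : Ordinal.{u}}
    (hβ : β < omega1) : ∃ b < omega1.{u}, β < b ∧ ∀ η < β, ∀ ξ < β, H η ξ < b := by
  have hsub : insert β ((fun p : Ordinal.{u} × Ordinal.{u} => H p.1 p.2) ''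
      (Set.Iio β ×ˢ Set.Iio β)) ⊆ Set.Iio omega1 := by
    rintro x (rfl | ⟨⟨η, ξ⟩, ⟨hη, hξ⟩, rfl⟩)
    · exact hβ
    · exact hH η (hη.trans hβ) ξ (hξ.trans hβ)
  have hcnt : (insert β ((fun p : Ordinal.{u} × Ordinal.{u} => H p.1 p.2) ''
      (Set.Iio β ×ˢ Set.Iio β))).Countable :=
    (Set.Countable.image (((countable_Iio hβ).prod (countable_Iio hβ))) _).insert β
  obtain ⟨b, hb, hball⟩ := exists_strict_bound hsub hcnt
  refine ⟨b, hb, hball β (Set.mem_insert _ _), fun η hη ξ hξ => ?_⟩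
  exact hball _ (Set.mem_insert_of_mem _ ⟨⟨η, ξ⟩, ⟨hη, hξ⟩, rfl⟩)

/-- The set of closure points of a two-variable function is club in `ω₁`. -/
theorem club_closure (H : Ordinal.{u} → Ordinal.{u} → Ordinal.{u})
    (hH : ∀ η < omega1.{u}, ∀ ξ < omega1.{u}, H η ξ < omega1) :
    OrdClub omega1.{u} {δ | δ < omega1 ∧ 0 < δ ∧ ∀ η < δ, ∀ ξ < δ, H η ξ < δ} := by
  classical
  refine ⟨fun δ hδ => hδ.1, ?_, ?_⟩
  · -- unbounded
    intro o ho
    set g : Ordinal.{u} → Ordinal.{u} := fun β =>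
      if h : β < omega1 then (exists_step H hH h).choose else 0 with hg
    have hgspec : ∀ β < omega1.{u}, g β < omega1 ∧ β < g β ∧
        ∀ η < β, ∀ ξ < β, H η ξ < g β := by
      intro β hβ
      rw [hg]; simp only [dif_pos hβ]
      obtain ⟨h1, h2, h3⟩ := (exists_step H hH hβ).choose_spec
      exact ⟨h1, h2, h3⟩
    set b : ℕ → Ordinal.{u} := fun n => Nat.rec (o + 1) (fun _ prev => g prev) n with hb
    have hblt : ∀ n, b n < omega1 := by
      intro n; induction n with
      | zero => exact omega1_isLimit.succ_lt ho
      | succ n ih => exact (hgspec _ ih).1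
    have hbsucc : ∀ n, b n < b (n + 1) := fun n => (hgspec _ (hblt n)).2.1
    have hbmono : ∀ m n, m ≤ n → b m ≤ b n := by
      intro m n h
      induction n with
      | zero => simp_all
      | succ n ih =>
        rcases Nat.lt_or_ge m (n+1) with h' | h'
        · exact (ih (Nat.lt_succ_iff.1 h')).trans (hbsucc n).le
        · have : m = n + 1 := le_antisymm h h'
          simp [this]
    have hrs : (Set.range b) ⊆ Set.Iio omega1 := by rintro x ⟨n, rfl⟩; exact hblt n
    have hbdd : BddAbove (Set.range b) := ⟨omega1, fun x hx => (hrs hx).le⟩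
    set δ : Ordinal.{u} := sSup (Set.range b) with hδ
    have hbleδ : ∀ n, b n ≤ δ := fun n => le_csSup hbdd (Set.mem_range_self n)
    have hδlt : δ < omega1 := by
      obtain ⟨c, hc, hcall⟩ := bounded_of_countable hrs (Set.countable_range b)
      exact lt_of_le_of_lt (csSup_le ⟨b 0, Set.mem_range_self 0⟩ fun x hx => hcall x hx) hc
    have hmem : ∀ x < δ, ∃ n, x < b n := by
      intro x hx
      obtain ⟨y, ⟨n, rfl⟩, hy⟩ := exists_lt_of_lt_csSup ⟨b 0, Set.mem_range_self 0⟩ hx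
      exact ⟨n, hy⟩
    refine ⟨δ, ⟨hδlt, lt_of_lt_of_le (lt_of_le_of_lt (zero_le (a := o))
      (Order.lt_succ o)) (hbleδ 0), ?_⟩, le_of_lt (lt_of_lt_of_le (Order.lt_succ o) (hbleδ 0))⟩
    intro η hη ξ hξ
    obtain ⟨m, hm⟩ := hmem η hη
    obtain ⟨n, hn⟩ := hmem ξ hξ
    have hη' : η < b (max m n) := lt_of_lt_of_le hm (hbmono _ _ (Nat.le_max_left m n))
    have hξ' : ξ < b (max m n) := lt_of_lt_of_le hn (hbmono _ _ (Nat.le_max_right m n))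
    exact lt_of_lt_of_le ((hgspec _ (hblt (max m n))).2.2 η hη' ξ hξ') (hbleδ (max m n + 1))
  · -- closed
    intro o ho hne happrox
    refine ⟨ho, pos_iff_ne_zero.2 hne, fun η hη ξ hξ => ?_⟩
    obtain ⟨c, hc, hlt, hco⟩ := happrox (max η ξ) (max_lt hη hξ)
    exact lt_trans (hc.2.2 η (lt_of_le_of_lt (le_max_left η ξ) hlt) ξ
      (lt_of_le_of_lt (le_max_right η ξ) hlt)) hco

end SRPaux
namespace SRPaux

open Classical in
/-- Transfinite chain through a club `C`, absorbing requirements `j ξ` at stage `ξ`. -/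
noncomputable def chain (C : Set (Set Ordinal.{u})) (j : Ordinal.{u} → Set Ordinal.{u}) :
    Ordinal.{u} → Set Ordinal.{u} :=
  WellFounded.fix Ordinal.lt_wf fun ξ ih =>
    if h : ∃ c ∈ C, ((⋃ η : Set.Iio ξ, ih η.1 η.2) ∪ j ξ) ⊆ c then h.choose else ∅

/-- the set the chain must cover at stage ξ -/
noncomputable def prevSet (C : Set (Set Ordinal.{u})) (j : Ordinal.{u} → Set Ordinal.{u})
    (ξ : Ordinal.{u}) : Set Ordinal.{u} :=
  (⋃ η : Set.Iio ξ, chain C j η.1) ∪ j ξ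

open Classical in
theorem chain_eq (C : Set (Set Ordinal.{u})) (j : Ordinal.{u} → Set Ordinal.{u})
    (ξ : Ordinal.{u}) :
    chain C j ξ = if h : ∃ c ∈ C, prevSet C j ξ ⊆ c then h.choose else ∅ := by
  rw [chain, WellFounded.fix_eq]
  rfl

variable {A : Set Ordinal.{u}} {C : Set (Set Ordinal.{u})} {j : Ordinal.{u} → Set Ordinal.{u}}

theorem chain_spec (hC : ClubOn A C) (hj : ∀ ξ < omega1.{u}, j ξ ⊆ A ∧ (j ξ).Countable) :
    ∀ ξ < omega1.{u}, chain C j ξ ∈ C ∧ j ξ ⊆ chain C j ξ ∧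
      ∀ η < ξ, chain C j η ⊆ chain C j ξ := by
  intro ξ hξ
  induction ξ using Ordinal.induction with
  | h ξ IH =>
  have hprev : prevSet C j ξ ⊆ A ∧ (prevSet C j ξ).Countable := by
    constructor
    · rintro x (hx | hx)
      · obtain ⟨s, ⟨⟨η, hη⟩, rfl⟩, hxs⟩ := hx
        exact (hC.1 _ (IH η hη (hη.trans hξ)).1).1 hxs
      · exact (hj ξ hξ).1 hx
    · refine Set.Countable.union ?_ (hj ξ hξ).2
      have : Countable (Set.Iio ξ) := (countable_Iio hξ).to_subtype
      exact Set.countable_iUnion fun η => (hC.1 _ (IH η.1 η.2 (η.2.trans hξ)).1).2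
  have h : ∃ c ∈ C, prevSet C j ξ ⊆ c := hC.2.1 _ hprev.1 hprev.2
  rw [chain_eq C j ξ, dif_pos h]
  obtain ⟨hc, hsub⟩ := h.choose_spec
  exact ⟨hc, fun x hx => hsub (Set.mem_union_right _ hx),
    fun η hη x hx => hsub (Set.mem_union_left _ ⟨_, ⟨⟨η, hη⟩, rfl⟩, hx⟩)⟩

theorem chain_mono (hC : ClubOn A C) (hj : ∀ ξ < omega1.{u}, j ξ ⊆ A ∧ (j ξ).Countable)
    {η ξ : Ordinal.{u}} (h : η ≤ ξ) (hξ : ξ < omega1.{u}) : chain C j η ⊆ chain C j ξ := by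
  rcases eq_or_lt_of_le h with rfl | h'
  · exact subset_rfl
  · exact (chain_spec hC hj ξ hξ).2.2 η h'

theorem chain_limit (hC : ClubOn A C) (hj : ∀ ξ < omega1.{u}, j ξ ⊆ A ∧ (j ξ).Countable)
    {δ : Ordinal.{u}} (hδ : δ < omega1.{u}) (hlim : Order.IsSuccLimit δ) :
    (⋃ η ∈ Set.Iio δ, chain C j η) ∈ C := by
  obtain ⟨f, hf⟩ := (countable_Iio hδ).exists_eq_range ⟨0, hlim.pos⟩
  have hfδ : ∀ n, f n < δ := by
    intro n
    have : f n ∈ Set.Iio δ := hf ▸ Set.mem_range_self n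
    exact this
  set v : ℕ → Ordinal.{u} := fun n => Nat.rec (f 0) (fun m prev => max prev (f (m+1))) n with hv
  have hvδ : ∀ n, v n < δ := by
    intro n; induction n with
    | zero => exact hfδ 0
    | succ n ih => exact max_lt ih (hfδ (n+1))
  have hvmono : Monotone v := monotone_nat_of_le_succ fun n => le_max_left _ _
  have hfv : ∀ n, f n ≤ v n := by
    intro n; cases n with
    | zero => exact le_rfl
    | succ n => exact le_max_right _ _
  set F : ℕ → Set Ordinal.{u} := fun n => chain C j (v n) with hF
  have hFC : ∀ n, F n ∈ C := fun n => (chain_spec hC hj _ ((hvδ n).trans hδ)).1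
  have hFmono : Monotone F := fun m n h =>
    chain_mono hC hj (hvmono h) ((hvδ n).trans hδ)
  have hEq : (⋃ n, F n) = ⋃ η ∈ Set.Iio δ, chain C j η := by
    apply Set.Subset.antisymm
    · exact Set.iUnion_subset fun n => Set.subset_biUnion_of_mem (u := fun η => chain C j η) (show v n ∈ Set.Iio δ from hvδ n)
    · refine Set.iUnion₂_subset fun η hη => ?_
      have : η ∈ Set.range f := hf ▸ hη
      obtain ⟨n, rfl⟩ := this
      exact (chain_mono hC hj (hfv n) ((hvδ n).trans hδ)).trans
        (Set.subset_iUnion F n)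
  exact hEq ▸ hC.2.2 F hFC hFmono

end SRPaux
namespace SRPaux

theorem Iio_inj {a b : Ordinal.{u}} (h : Set.Iio a = Set.Iio b) : a = b := by
  by_contra hne
  rcases lt_or_gt_of_ne hne with h' | h'
  · have : a ∈ Set.Iio b := h' 
    rw [← h] at this; exact lt_irrefl a this
  · have : b ∈ Set.Iio a := h'
    rw [h] at this; exact lt_irrefl b this

theorem exists_disjoint_club {s : Set Ordinal.{u}} (hs : s ⊆ Set.Iio omega1)
    (hns : ¬ OrdStationary omega1.{u} s) :
    ∃ Cl, OrdClub omega1.{u} Cl ∧ s ∩ Cl = ∅ := by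
  rw [OrdStationary, not_and] at hns
  push_neg at hns
  obtain ⟨Cl, hCl, hne⟩ := hns hs
  exact ⟨Cl, hCl, hne⟩

/-- Every antichain extends to a maximal one, which moreover meets every
stationary set stationarily. -/
theorem exists_max_antichain (𝒜₀ : Set (Set Ordinal.{u}))
    (h₀ : (∀ s ∈ 𝒜₀, OrdStationary omega1.{u} s) ∧
      ∀ s ∈ 𝒜₀, ∀ t ∈ 𝒜₀, s ≠ t → ¬ OrdStationary omega1.{u} (s ∩ t)) :
    ∃ 𝒜 : Set (Set Ordinal.{u}), 𝒜₀ ⊆ 𝒜 ∧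
      (∀ s ∈ 𝒜, OrdStationary omega1.{u} s) ∧
      (∀ s ∈ 𝒜, ∀ t ∈ 𝒜, s ≠ t → ¬ OrdStationary omega1.{u} (s ∩ t)) ∧
      (∀ T, OrdStationary omega1.{u} T → ∃ s ∈ 𝒜, OrdStationary omega1.{u} (T ∩ s)) := by
  set S : Set (Set (Set Ordinal.{u})) := {𝒜 | (∀ s ∈ 𝒜, OrdStationary omega1.{u} s) ∧
      ∀ s ∈ 𝒜, ∀ t ∈ 𝒜, s ≠ t → ¬ OrdStationary omega1.{u} (s ∩ t)} with hS
  have hzorn := zorn_subset_nonempty S ?_ 𝒜₀ h₀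
  · obtain ⟨𝒜, hsub, hmax⟩ := hzorn
    refine ⟨𝒜, hsub, hmax.prop.1, hmax.prop.2, ?_⟩
    intro T hT
    by_contra hcon
    push_neg at hcon
    have hTnot : T ∉ 𝒜 := by
      intro hmem
      have := hcon T hmem
      rw [Set.inter_self] at this
      exact this hT
    have hnew : insert T 𝒜 ∈ S := by
      constructor
      · rintro s (rfl | hs)
        · exact hT
        · exact hmax.prop.1 s hs
      · rintro s (rfl | hs) t (rfl | ht) hne
        · exact absurd rfl hne
        · exact hcon t ht
        · rw [Set.inter_comm]; exact hcon s hs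
        · exact hmax.prop.2 s hs t ht hne
    have : insert T 𝒜 ⊆ 𝒜 := hmax.2 hnew (Set.subset_insert T 𝒜)
    exact hTnot (this (Set.mem_insert T 𝒜))
  · intro c hcS hchain hcne
    obtain ⟨a, ha⟩ := hcne
    refine ⟨⋃₀ c, ⟨?_, ?_⟩, fun s hs => Set.subset_sUnion_of_mem hs⟩
    · rintro s ⟨b, hb, hsb⟩
      exact (hcS hb).1 s hsb
    · rintro s ⟨b, hb, hsb⟩ t ⟨b', hb', htb'⟩ hne
      rcases hchain.total hb hb' with h | h
      · exact (hcS hb').2 s (h hsb) t htb' hne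
      · exact (hcS hb).2 s hsb t (h htb') hne

end SRPaux
namespace SRPaux

theorem lift_aleph_two : Cardinal.lift.{u+1, u} (Cardinal.aleph 2) = Cardinal.aleph 2 := by
  rw [Cardinal.lift_aleph]
  norm_num

theorem mk_Iio_omega1 : Cardinal.mk (Set.Iio omega1.{u}) = Cardinal.aleph 1 := by
  rw [show omega1.{u} = (Cardinal.aleph 1).ord from rfl, Ordinal.mk_Iio_ordinal,
    Cardinal.card_ord, lift_aleph_one]

end SRPaux

/-- SRP implies that the non-stationary ideal on `ω₁` is saturated: there is no family
`{A_α : α < ω₂}` of stationary subsets of `ω₁` with `A_α ∩ A_β` non-stationary for `α ≠ β`. -/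
theorem srp_implies_ns_saturated (hSRP : SRP.{u}) :
    ¬ ∃ A : Ordinal.{u} → Set Ordinal.{u},
      (∀ α < (Cardinal.aleph 2).ord, OrdStationary omega1 (A α)) ∧
      (∀ α < (Cardinal.aleph 2).ord, ∀ β < (Cardinal.aleph 2).ord, α ≠ β →
        ¬ OrdStationary omega1 (A α ∩ A β)) := by
  classical
  open SRPaux Cardinal Set in
  rintro ⟨A, hstat, hdisj⟩
  have haleph2pos : (0 : Ordinal.{u}) < (Cardinal.aleph 2).ord :=
    (Cardinal.isSuccLimit_ord (Cardinal.aleph0_le_aleph 2)).pos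
  -- A is injective
  have hAinj : ∀ α < (Cardinal.aleph 2).ord, ∀ β < (Cardinal.aleph 2).ord,
      A α = A β → α = β := by
    intro α hα β hβ hAB
    by_contra hne
    apply hdisj α hα β hβ hne
    rw [hAB, Set.inter_self]
    exact hstat β hβ
  -- maximal antichain
  obtain ⟨𝒜, h𝒜₀sub, h𝒜stat, h𝒜anti, h𝒜max⟩ :=
    exists_max_antichain (A '' Set.Iio ((Cardinal.aleph 2).ord))
      ⟨by rintro s ⟨α, hα, rfl⟩; exact hstat α hα,
       by rintro s ⟨α, hα, rfl⟩ t ⟨β, hβ, rfl⟩ hne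
          exact hdisj α hα β hβ (fun h => hne (h ▸ rfl))⟩
  set lam : Cardinal.{u} := max (Cardinal.aleph 2) (2 ^ Cardinal.aleph 1) with hlamdef
  have hlam2 : Cardinal.aleph 2 ≤ lam := le_max_left _ _
  have homega1lam : omega1.{u} ≤ lam.ord :=
    Cardinal.ord_le_ord.2 ((Cardinal.aleph_le_aleph.2 one_le_two).trans hlam2)
  -- an enumeration of 𝒜 by ordinals below lam.ord
  have h𝒜ne : A 0 ∈ 𝒜 := h𝒜₀sub ⟨0, haleph2pos, rfl⟩
  have hmk𝒜 : Cardinal.mk ↥𝒜 ≤ Cardinal.mk ↥(Set.Iio lam.ord) := by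
    have h1 : Cardinal.mk ↥𝒜 ≤ Cardinal.mk ↥(𝒫 (Set.Iio omega1.{u})) :=
      Cardinal.mk_le_mk_of_subset (fun s hs x hx => (h𝒜stat s hs).1 hx)
    have h2 : Cardinal.mk ↥(𝒫 (Set.Iio omega1.{u})) = 2 ^ (Cardinal.aleph 1 : Cardinal.{u+1}) := by
      rw [Cardinal.mk_powerset, mk_Iio_omega1]
    have h3 : (2 : Cardinal.{u+1}) ^ (Cardinal.aleph 1 : Cardinal.{u+1}) ≤
        Cardinal.lift.{u+1} lam := by
      rw [← lift_aleph_one, ← Cardinal.lift_two.{u+1,u}, ← Cardinal.lift_power]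
      exact Cardinal.lift_le.2 (le_max_right _ _)
    have h4 : Cardinal.mk ↥(Set.Iio lam.ord) = Cardinal.lift.{u+1} lam := by
      rw [Ordinal.mk_Iio_ordinal, Cardinal.card_ord]
    rw [h4]
    exact h1.trans (h2 ▸ h3)
  obtain ⟨ι⟩ := Cardinal.le_def _ _ |>.1 hmk𝒜
  set g : Ordinal.{u} → Set Ordinal.{u} := fun β =>
    if h : ∃ s : ↥𝒜, ((ι s : ↥(Set.Iio lam.ord)) : Ordinal.{u}) = β then (h.choose : Set Ordinal.{u})
    else A 0 with hgdef
  have hgmem : ∀ β, g β ∈ 𝒜 := by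
    intro β
    rw [hgdef]
    by_cases h : ∃ s : ↥𝒜, ((ι s : ↥(Set.Iio lam.ord)) : Ordinal.{u}) = β
    · simp only [dif_pos h]; exact h.choose.2
    · simp only [dif_neg h]; exact h𝒜ne
  have hgsurj : ∀ s ∈ 𝒜, ∃ β < lam.ord, g β = s := by
    intro s hs
    refine ⟨((ι ⟨s, hs⟩ : ↥(Set.Iio lam.ord)) : Ordinal.{u}), (ι ⟨s, hs⟩).2, ?_⟩
    have h : ∃ t : ↥𝒜, ((ι t : ↥(Set.Iio lam.ord)) : Ordinal.{u}) =
        ((ι ⟨s, hs⟩ : ↥(Set.Iio lam.ord)) : Ordinal.{u}) := ⟨⟨s, hs⟩, rfl⟩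
    rw [hgdef]
    simp only [dif_pos h]
    have := h.choose_spec
    have heq : h.choose = (⟨s, hs⟩ : ↥𝒜) := ι.injective (Subtype.ext this)
    rw [heq]
  set Z : Set (Set Ordinal.{u}) := {σ | σ ⊆ Set.Iio lam.ord ∧ σ.Countable ∧
    ∃ δ, σ ∩ Set.Iio omega1 = Set.Iio δ ∧ ∃ β ∈ σ, δ ∈ g β} with hZdef
  -- verification of the SRP hypothesis
  have hZ2 : ∀ T : Set Ordinal.{u}, OrdStationary omega1 T →
      StationaryOn (Set.Iio lam.ord)
        {σ ∈ Z | ∃ δ ∈ T, σ ∩ Set.Iio omega1 = Set.Iio δ} := by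
    intro T hT C hC
    obtain ⟨s, hs𝒜, hTs⟩ := h𝒜max T hT
    obtain ⟨β, hβlam, hgβ⟩ := hgsurj s hs𝒜
    set j : Ordinal.{u} → Set Ordinal.{u} := fun ξ => insert β (Set.Iio ξ) with hjdef
    have hj : ∀ ξ < omega1.{u}, j ξ ⊆ Set.Iio lam.ord ∧ (j ξ).Countable := by
      intro ξ hξ
      refine ⟨?_, (countable_Iio hξ).insert β⟩
      rintro x (rfl | hx)
      · exact hβlam
      · exact lt_of_lt_of_le (hx.trans hξ) homega1lam
    have hbnd : ∀ ξ, ξ < omega1.{u} →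
        ∃ b, b < omega1.{u} ∧ ∀ x ∈ chain C j ξ ∩ Set.Iio omega1, x < b := by
      intro ξ hξ
      obtain ⟨b, hb, h⟩ := exists_strict_bound (s := chain C j ξ ∩ Set.Iio omega1)
        Set.inter_subset_right
        (((hC.1 _ (chain_spec hC hj ξ hξ).1).2).mono Set.inter_subset_left)
      exact ⟨b, hb, h⟩
    set h₁ : Ordinal.{u} → Ordinal.{u} := fun ξ =>
      if h : ξ < omega1 then (hbnd ξ h).choose else 0 with h₁def
    have h₁spec : ∀ ξ, (h : ξ < omega1.{u}) → h₁ ξ < omega1 ∧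
        ∀ x ∈ chain C j ξ ∩ Set.Iio omega1, x < h₁ ξ := by
      intro ξ h
      rw [h₁def]; simp only [dif_pos h]
      exact (hbnd ξ h).choose_spec
    set H : Ordinal.{u} → Ordinal.{u} → Ordinal.{u} := fun _ ξ => max (h₁ ξ) (ξ + 1) with hHdef
    have hH : ∀ η < omega1.{u}, ∀ ξ < omega1.{u}, H η ξ < omega1 := by
      intro η _ ξ hξ
      exact max_lt (h₁spec ξ hξ).1
        (by rw [Ordinal.add_one_eq_succ]; exact omega1_isLimit.succ_lt hξ)
    obtain ⟨δ, ⟨hδT, hδs⟩, hδω, hδ0, hδcl⟩ := hTs.2 _ (club_closure H hH)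
    have hδH : ∀ ξ < δ, h₁ ξ < δ ∧ ξ + 1 < δ := by
      intro ξ hξ
      have := hδcl 0 hδ0 ξ hξ
      exact ⟨lt_of_le_of_lt (le_max_left _ _) this, lt_of_le_of_lt (le_max_right _ _) this⟩
    have hlim : Order.IsSuccLimit δ := by
      refine Ordinal.isSuccLimit_iff.2 ⟨pos_iff_ne_zero.1 hδ0, Order.isSuccPrelimit_iff_succ_lt.2 fun a ha => ?_⟩
      rw [← Ordinal.add_one_eq_succ]
      exact (hδH a ha).2
    set τ : Set Ordinal.{u} := ⋃ η ∈ Set.Iio δ, chain C j η with hτdef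
    have hτC : τ ∈ C := chain_limit hC hj hδω hlim
    have hτω : τ ∩ Set.Iio omega1 = Set.Iio δ := by
      apply Set.Subset.antisymm
      · rintro x ⟨hx1, hx2⟩
        rw [hτdef, Set.mem_iUnion₂] at hx1
        obtain ⟨η, hη, hxη⟩ := hx1
        exact lt_trans ((h₁spec η (lt_trans hη hδω)).2 x ⟨hxη, hx2⟩) (hδH η hη).1
      · intro x hx
        have hx1 : x ∈ chain C j (x + 1) :=
          (chain_spec hC hj (x + 1) (lt_trans (hδH x hx).2 hδω)).2.1
            (Set.mem_insert_of_mem _ (Order.lt_succ x))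
        exact ⟨Set.mem_biUnion (hδH x hx).2 hx1, lt_trans hx hδω⟩
    have hβτ : β ∈ τ := by
      have : β ∈ chain C j 0 :=
        (chain_spec hC hj 0 omega1_isLimit.pos).2.1 (Set.mem_insert _ _)
      exact Set.mem_biUnion hδ0 this
    refine ⟨τ, ⟨⟨(hC.1 τ hτC).1, (hC.1 τ hτC).2, δ, hτω, β, hβτ, ?_⟩, δ, hδT, hτω⟩, hτC⟩
    rw [hgβ]; exact hδs
  -- apply SRP
  obtain ⟨Y, hXY, hYsub, hmkY, D, hDZ, hD⟩ := hSRP lam hlam2 Z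
    (fun σ hσ => ⟨hσ.1, hσ.2.1⟩) hZ2 (Set.Iio omega1)
    (fun x hx => lt_of_lt_of_le hx homega1lam) mk_Iio_omega1
  -- an enumeration of Y
  have hYeq : Cardinal.mk ↥(Set.Iio omega1.{u}) = Cardinal.mk ↥Y := by
    rw [mk_Iio_omega1, hmkY]
  obtain ⟨e⟩ := Cardinal.eq.1 hYeq
  set yfun : Ordinal.{u} → Ordinal.{u} := fun η =>
    if h : η < omega1 then ((e ⟨η, h⟩ : ↥Y) : Ordinal.{u}) else 0 with hydef
  have hymem : ∀ η, η < omega1.{u} → yfun η ∈ Y := by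
    intro η h; rw [hydef]; simp only [dif_pos h]; exact (e ⟨η, h⟩).2
  have hyinj : ∀ η, η < omega1.{u} → ∀ η', η' < omega1.{u} → yfun η = yfun η' → η = η' := by
    intro η h η' h' heq
    rw [hydef] at heq; simp only [dif_pos h, dif_pos h'] at heq
    have := e.injective (Subtype.ext heq)
    exact congrArg Subtype.val this
  have hysurj : ∀ x ∈ Y, ∃ η, η < omega1.{u} ∧ yfun η = x := by
    intro x hx
    obtain ⟨η, hη⟩ := e.surjective ⟨x, hx⟩
    refine ⟨η.1, η.2, ?_⟩
    show (if h : (η : Ordinal.{u}) < omega1 then ((e ⟨(η : Ordinal.{u}), h⟩ : ↥Y) : Ordinal.{u}) else 0) = x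
    rw [dif_pos (show (η : Ordinal.{u}) < omega1.{u} from η.2)]
    exact congrArg Subtype.val hη
  -- find γ outside the range used by Y
  have hγ : ∃ γ, γ < (Cardinal.aleph 2).ord ∧
      ¬ ∃ η, η < omega1.{u} ∧ g (yfun η) = A γ := by
    by_contra hcon
    push_neg at hcon
    set bad : Set Ordinal.{u} := {α | α < (Cardinal.aleph 2).ord ∧
      ∃ η, η < omega1.{u} ∧ g (yfun η) = A α} with hbaddef
    have hsub : Set.Iio ((Cardinal.aleph 2).ord) ⊆ bad := fun α hα => ⟨hα, hcon α hα⟩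
    have hF : ∀ α : ↥bad, ∃ η, η < omega1.{u} ∧ g (yfun η) = A α.1 := fun α => α.2.2
    have hinj : Function.Injective
        (fun α : ↥bad => (⟨(hF α).choose, (hF α).choose_spec.1⟩ : ↥(Set.Iio omega1.{u}))) := by
      intro α α' heq
      have h1 := (hF α).choose_spec.2
      have h2 := (hF α').choose_spec.2
      have : (hF α).choose = (hF α').choose := congrArg Subtype.val heq
      rw [this, h2] at h1
      exact Subtype.ext (hAinj α.1 α.2.1 α'.1 α'.2.1 h1.symm)
    have hle : Cardinal.mk ↥bad ≤ Cardinal.mk ↥(Set.Iio omega1.{u}) :=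
      Cardinal.le_def _ _ |>.2 ⟨_, hinj⟩
    have hge : Cardinal.mk ↥(Set.Iio ((Cardinal.aleph 2).ord)) ≤ Cardinal.mk ↥bad :=
      Cardinal.mk_le_mk_of_subset hsub
    rw [Ordinal.mk_Iio_ordinal, Cardinal.card_ord, lift_aleph_two] at hge
    rw [mk_Iio_omega1] at hle
    exact absurd (hge.trans hle) (not_le.2 (Cardinal.aleph_lt_aleph.2 one_lt_two))
  obtain ⟨γ, hγ2, hγbad⟩ := hγ
  have hAγ𝒜 : A γ ∈ 𝒜 := h𝒜₀sub ⟨γ, hγ2, rfl⟩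
  -- clubs avoiding the pairwise intersections
  have hclub : ∀ η, η < omega1.{u} →
      ∃ Cl, OrdClub omega1.{u} Cl ∧ (A γ ∩ g (yfun η)) ∩ Cl = ∅ := by
    intro η hη
    apply exists_disjoint_club (fun x hx => (hstat γ hγ2).1 hx.1)
    apply h𝒜anti (A γ) hAγ𝒜 (g (yfun η)) (hgmem _)
    intro heq
    exact hγbad ⟨η, hη, heq.symm⟩
  set Cl : Ordinal.{u} → Set Ordinal.{u} := fun η =>
    if h : η < omega1 then (hclub η h).choose else Set.Iio omega1 with hCldef
  have hClspec : ∀ η, (h : η < omega1.{u}) → OrdClub omega1.{u} (Cl η) ∧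
      (A γ ∩ g (yfun η)) ∩ Cl η = ∅ := by
    intro η h
    rw [hCldef]; simp only [dif_pos h]
    exact (hclub η h).choose_spec
  have hnext : ∀ η, η < omega1.{u} → ∀ ξ, ξ < omega1.{u} →
      ∃ c, c ∈ Cl η ∧ ξ < c ∧ c < omega1.{u} := by
    intro η hη ξ hξ
    obtain ⟨c, hc, hle⟩ := (hClspec η hη).1.2.1 (ξ + 1) (by
      rw [Ordinal.add_one_eq_succ]; exact omega1_isLimit.succ_lt hξ)
    exact ⟨c, hc, lt_of_lt_of_le (Order.lt_succ ξ) (by rwa [← Ordinal.add_one_eq_succ]),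
      (hClspec η hη).1.1 hc⟩
  set next : Ordinal.{u} → Ordinal.{u} → Ordinal.{u} := fun η ξ =>
    if h : η < omega1 ∧ ξ < omega1 then (hnext η h.1 ξ h.2).choose else 0 with hnextdef
  have hnextspec : ∀ η ξ, (h : η < omega1.{u} ∧ ξ < omega1.{u}) →
      next η ξ ∈ Cl η ∧ ξ < next η ξ ∧ next η ξ < omega1.{u} := by
    intro η ξ h
    rw [hnextdef]; simp only [dif_pos h]
    exact (hnext η h.1 ξ h.2).choose_spec
  -- chain through D
  set j' : Ordinal.{u} → Set Ordinal.{u} := fun ξ => Set.Iio ξ ∪ yfun '' Set.Iio ξ with hj'def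
  have hj' : ∀ ξ < omega1.{u}, j' ξ ⊆ Y ∧ (j' ξ).Countable := by
    intro ξ hξ
    constructor
    · rintro x (hx | ⟨η, hη, rfl⟩)
      · exact hXY (hx.trans hξ)
      · exact hymem η (hη.trans hξ)
    · exact (countable_Iio hξ).union ((countable_Iio hξ).image yfun)
  have hbnd₁ : ∀ ξ, ξ < omega1.{u} →
      ∃ b, b < omega1.{u} ∧ ∀ x ∈ chain D j' ξ ∩ Set.Iio omega1, x < b := by
    intro ξ hξ
    obtain ⟨b, hb, h⟩ := exists_strict_bound (s := chain D j' ξ ∩ Set.Iio omega1)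
      Set.inter_subset_right
      (((hD.1 _ (chain_spec hD hj' ξ hξ).1).2).mono Set.inter_subset_left)
    exact ⟨b, hb, h⟩
  set h₁ : Ordinal.{u} → Ordinal.{u} := fun ξ =>
    if h : ξ < omega1 then (hbnd₁ ξ h).choose else 0 with h₁def
  have h₁spec : ∀ ξ, (h : ξ < omega1.{u}) → h₁ ξ < omega1 ∧
      ∀ x ∈ chain D j' ξ ∩ Set.Iio omega1, x < h₁ ξ := by
    intro ξ h
    rw [h₁def]; simp only [dif_pos h]
    exact (hbnd₁ ξ h).choose_spec
  have hbnd₂ : ∀ ξ, ξ < omega1.{u} →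
      ∃ b, b < omega1.{u} ∧ ∀ η ∈ Set.Iio omega1 ∩ yfun ⁻¹' (chain D j' ξ), η < b := by
    intro ξ hξ
    apply exists_strict_bound Set.inter_subset_left
    apply Set.MapsTo.countable_of_injOn (t := chain D j' ξ)
      (fun η hη => hη.2) (fun η hη η' hη' heq => hyinj η hη.1 η' hη'.1 heq)
    exact (hD.1 _ (chain_spec hD hj' ξ hξ).1).2
  set h₂ : Ordinal.{u} → Ordinal.{u} := fun ξ =>
    if h : ξ < omega1 then (hbnd₂ ξ h).choose else 0 with h₂def
  have h₂spec : ∀ ξ, (h : ξ < omega1.{u}) → h₂ ξ < omega1 ∧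
      ∀ η ∈ Set.Iio omega1 ∩ yfun ⁻¹' (chain D j' ξ), η < h₂ ξ := by
    intro ξ h
    rw [h₂def]; simp only [dif_pos h]
    exact (hbnd₂ ξ h).choose_spec
  set H : Ordinal.{u} → Ordinal.{u} → Ordinal.{u} := fun η ξ =>
    max (max (h₁ ξ) (h₂ ξ)) (max (next η ξ) (ξ + 1)) with hHdef
  have hH : ∀ η < omega1.{u}, ∀ ξ < omega1.{u}, H η ξ < omega1 := by
    intro η hη ξ hξ
    refine max_lt (max_lt (h₁spec ξ hξ).1 (h₂spec ξ hξ).1)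
      (max_lt (hnextspec η ξ ⟨hη, hξ⟩).2.2 ?_)
    rw [Ordinal.add_one_eq_succ]; exact omega1_isLimit.succ_lt hξ
  obtain ⟨δ, hδγ, hδω, hδ0, hδcl⟩ := (hstat γ hγ2).2 _ (club_closure H hH)
  have hδ₁ : ∀ ξ < δ, h₁ ξ < δ := fun ξ hξ =>
    lt_of_le_of_lt ((le_max_left _ _).trans (le_max_left _ _)) (hδcl 0 hδ0 ξ hξ)
  have hδ₂ : ∀ ξ < δ, h₂ ξ < δ := fun ξ hξ =>
    lt_of_le_of_lt ((le_max_right _ _).trans (le_max_left _ _)) (hδcl 0 hδ0 ξ hξ)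
  have hδnext : ∀ η < δ, ∀ ξ < δ, next η ξ < δ := fun η hη ξ hξ =>
    lt_of_le_of_lt ((le_max_left _ _).trans (le_max_right _ _)) (hδcl η hη ξ hξ)
  have hδsucc : ∀ ξ < δ, ξ + 1 < δ := fun ξ hξ =>
    lt_of_le_of_lt ((le_max_right _ _).trans (le_max_right _ _)) (hδcl 0 hδ0 ξ hξ)
  have hlim : Order.IsSuccLimit δ := by
    refine Ordinal.isSuccLimit_iff.2 ⟨pos_iff_ne_zero.1 hδ0, Order.isSuccPrelimit_iff_succ_lt.2 fun a ha => ?_⟩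
    rw [← Ordinal.add_one_eq_succ]
    exact hδsucc a ha
  set τ : Set Ordinal.{u} := ⋃ η ∈ Set.Iio δ, chain D j' η with hτdef
  have hτD : τ ∈ D := chain_limit hD hj' hδω hlim
  have hτω : τ ∩ Set.Iio omega1 = Set.Iio δ := by
    apply Set.Subset.antisymm
    · rintro x ⟨hx1, hx2⟩
      rw [hτdef, Set.mem_iUnion₂] at hx1
      obtain ⟨η, hη, hxη⟩ := hx1
      exact lt_trans ((h₁spec η (lt_trans hη hδω)).2 x ⟨hxη, hx2⟩) (hδ₁ η hη)
    · intro x hx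
      have hx1 : x ∈ chain D j' (x + 1) :=
        (chain_spec hD hj' (x + 1) (lt_trans (hδsucc x hx) hδω)).2.1
          (Set.mem_union_left _ (Order.lt_succ x))
      exact ⟨Set.mem_biUnion (hδsucc x hx) hx1, lt_trans hx hδω⟩
  -- τ ∈ Z: extract witnesses
  obtain ⟨hτlam, hτcnt, δ'', hδ''eq, β, hβτ, hδ''g⟩ := hDZ hτD
  have hδ''δ : δ'' = δ := Iio_inj (hδ''eq.symm.trans hτω)
  rw [hδ''δ] at hδ''g
  have hβY : β ∈ Y := (hD.1 τ hτD).1 hβτ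
  obtain ⟨η₀, hη₀ω, hyβ⟩ := hysurj β hβY
  -- η₀ < δ
  have hβchain : ∃ ξ, ξ < δ ∧ β ∈ chain D j' ξ := by
    rw [hτdef, Set.mem_iUnion₂] at hβτ
    obtain ⟨ξ, hξ, h⟩ := hβτ
    exact ⟨ξ, hξ, h⟩
  obtain ⟨ξ₀, hξ₀δ, hβξ₀⟩ := hβchain
  have hη₀δ : η₀ < δ := by
    have : η₀ ∈ Set.Iio omega1 ∩ yfun ⁻¹' (chain D j' ξ₀) :=
      ⟨hη₀ω, by rw [Set.mem_preimage, hyβ]; exact hβξ₀⟩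
    exact lt_trans ((h₂spec ξ₀ (lt_trans hξ₀δ hδω)).2 η₀ this) (hδ₂ ξ₀ hξ₀δ)
  -- δ ∈ Cl η₀
  have hδCl : δ ∈ Cl η₀ := by
    apply (hClspec η₀ hη₀ω).1.2.2 δ hδω (pos_iff_ne_zero.1 hδ0)
    intro b hb
    refine ⟨next η₀ b, (hnextspec η₀ b ⟨hη₀ω, lt_trans hb hδω⟩).1,
      (hnextspec η₀ b ⟨hη₀ω, lt_trans hb hδω⟩).2.1, hδnext η₀ hη₀δ b hb⟩
  -- contradiction
  have : δ ∈ (A γ ∩ g (yfun η₀)) ∩ Cl η₀ := ⟨⟨hδγ, by rw [hyβ]; exact hδ''g⟩, hδCl⟩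
  rw [(hClspec η₀ hη₀ω).2] at this
  exact this
end

section
/- Assume the P-ideal Dichotomy (PID). Then every locally compact Hausdorff space X satisfies at least one of: (1) X is the union of countably many ω-bounded subspaces; (2) X has an uncountable closed discrete subspace; (3) X has a separable subspace whose closure is not Lindelöf. -/
universe u

/-- The P-ideal Dichotomy (PID): for every uncountable set `X` and every P-ideal `I` of countable
subsets of `X` (downward closed, and such that every countable subfamily is almost included in a
single member), either there is an uncountable `A ⊆ X` all of whose countable subsets are in `I`,
or `X` is a countable union of sets orthogonal to `I`. -/
def PID : Prop :=
  ∀ (X : Type u), Uncountable X → ∀ I : Set (Set X),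
    (∀ s ∈ I, s.Countable) →
    (∀ s ∈ I, ∀ t ⊆ s, t ∈ I) →
    (∀ f : ℕ → Set X, (∀ n, f n ∈ I) → ∃ J ∈ I, ∀ n, (f n \ J).Finite) →
    (∃ A : Set X, ¬ A.Countable ∧ ∀ B ⊆ A, B.Countable → B ∈ I) ∨
    (∃ B : ℕ → Set X, (⋃ n, B n) = Set.univ ∧ ∀ n, ∀ s ∈ I, (B n ∩ s).Finite)

/-- A subspace `A` of a topological space is ω-bounded if every countable subset of `A` has
compact closure in `A` (the closure being taken in the subspace `A`). -/
def OmegaBounded {X : Type u} [TopologicalSpace X] (A : Set X) : Prop :=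
  ∀ B ⊆ A, B.Countable → IsCompact (closure B ∩ A)

open Set Filter Topology

section Aux

variable {X : Type u} [TopologicalSpace X]

/-- If some neighbourhood of `x` meets `s` in a finite set, then the punctured neighbourhood
filter at `x` is disjoint from `𝓟 s`. -/
lemma aux_disjoint_of_finite_inter [T1Space X] {x : X} {U s : Set X}
    (hU : U ∈ 𝓝 x) (hfin : (U ∩ s).Finite) : Disjoint (𝓝[≠] x) (𝓟 s) := by
  rw [Filter.disjoint_principal_right]
  rw [mem_nhdsWithin_iff_exists_mem_nhds_inter]
  refine ⟨U \ ((U ∩ s) \ {x}), ?_, ?_⟩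
  · have hcl : IsClosed ((U ∩ s) \ {x}) := hfin.sdiff.isClosed
    have hxmem : x ∈ ((U ∩ s) \ {x})ᶜ := fun h => h.2 rfl
    exact Filter.inter_mem hU (hcl.isOpen_compl.mem_nhds hxmem)
  · rintro y ⟨⟨hyU, hyF⟩, hyne⟩ hys
    exact hyF ⟨⟨hyU, hys⟩, hyne⟩

/-- A set all of whose punctured neighbourhood filters are disjoint from it (i.e. a closed
discrete set) meets every compact set in a finite set. -/
lemma aux_finite_inter_compact [T1Space X] {s K : Set X}
    (hs : ∀ x, Disjoint (𝓝[≠] x) (𝓟 s)) (hK : IsCompact K) : (s ∩ K).Finite := by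
  have h : ∀ x : X, ∃ V ∈ 𝓝 x, V ∩ s ⊆ {x} := by
    intro x
    have h1 : sᶜ ∈ 𝓝[≠] x := Filter.disjoint_principal_right.1 (hs x)
    rw [mem_nhdsWithin_iff_exists_mem_nhds_inter] at h1
    obtain ⟨u, hu, hsub⟩ := h1
    refine ⟨u, hu, ?_⟩
    rintro y ⟨hyu, hys⟩
    by_contra hne
    exact hsub ⟨hyu, hne⟩ hys
  choose V hV hVs using h
  obtain ⟨t, _, ht⟩ := hK.elim_nhds_subcover V (fun x _ => hV x)
  refine t.finite_toSet.subset ?_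
  rintro y ⟨hys, hyK⟩
  obtain ⟨x, hxt, hyx⟩ := Set.mem_iUnion₂.1 (ht hyK)
  have : y = x := hVs x ⟨hyx, hys⟩
  exact this ▸ hxt

variable [T2Space X] [LocallyCompactSpace X]

set_option linter.unusedSectionVars false in

/-- Exhaustion of the (Lindelöf) closure of a set by compacta, with neighbourhoods. -/
lemma aux_exists_exhaustion {S : Set X} (hS : IsLindelof (closure S)) :
    ∃ K : ℕ → Set X, Monotone K ∧ (∀ m, IsCompact (K m)) ∧
      ∀ x ∈ closure S, ∃ m, ∃ U, IsOpen U ∧ x ∈ U ∧ U ∩ closure S ⊆ K m := by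
  choose N hNc hNn using fun x : X => exists_compact_mem_nhds x
  have cover : closure S ⊆ ⋃ x : X, interior (N x) := fun y _ =>
    Set.mem_iUnion.2 ⟨y, mem_interior_iff_mem_nhds.2 (hNn y)⟩
  obtain ⟨r, hrc, hrcov⟩ :=
    hS.elim_countable_subcover (fun x => interior (N x)) (fun _ => isOpen_interior) cover
  rcases r.eq_empty_or_nonempty with rfl | hne
  · refine ⟨fun _ => ∅, monotone_const, fun _ => isCompact_empty, ?_⟩
    intro x hx
    have := hrcov hx
    simp at this
  · obtain ⟨e, he⟩ := hrc.exists_eq_range hne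
    refine ⟨fun m => closure S ∩ ⋃ j ∈ Set.Iic m, N (e j), ?_, ?_, ?_⟩
    · intro a b hab
      exact Set.inter_subset_inter_right _
        (Set.biUnion_subset_biUnion_left (Set.Iic_subset_Iic.2 hab))
    · intro m
      have hcpt : IsCompact (⋃ j ∈ Set.Iic m, N (e j)) :=
        (Set.finite_Iic m).isCompact_biUnion (fun j _ => hNc (e j))
      exact hcpt.inter_left isClosed_closure
    · intro x hx
      have := hrcov hx
      rw [he] at this
      obtain ⟨y, ⟨m, rfl⟩, hxy⟩ := Set.mem_iUnion₂.1 this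
      refine ⟨m, interior (N (e m)), isOpen_interior, hxy, ?_⟩
      rintro z ⟨hz1, hz2⟩
      exact ⟨hz2, Set.mem_biUnion (Set.mem_Iic.2 le_rfl) (interior_subset hz1)⟩

/-- Key lemma: if every countable set has Lindelöf closure, and `B` meets every countable closed
discrete set in a finite set, then every countable subset of `B` has compact closure. -/
lemma aux_compact_closure
    (hLin : ∀ c : Set X, c.Countable → IsLindelof (closure c))
    {B : Set X} (hB : ∀ s : Set X, s.Countable → (∀ x, Disjoint (𝓝[≠] x) (𝓟 s)) →
      (B ∩ s).Finite)
    {C : Set X} (hCB : C ⊆ B) (hCc : C.Countable) : IsCompact (closure C) := by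
  by_contra hnc
  obtain ⟨K, hKmono, hKcomp, hKnbhd⟩ := aux_exists_exhaustion (hLin C hCc)
  have hnot : ∀ m, ¬ C ⊆ K m := by
    intro m hsub
    exact hnc ((hKcomp m).of_isClosed_subset isClosed_closure
      (closure_minimal hsub (hKcomp m).isClosed))
  choose c hcC hcK using fun m => Set.not_subset.1 (hnot m)
  have htI : ∀ x, Disjoint (𝓝[≠] x) (𝓟 (Set.range c)) := by
    intro x
    by_cases hx : x ∈ closure C
    · obtain ⟨m, U, hUo, hxU, hUK⟩ := hKnbhd x hx
      apply aux_disjoint_of_finite_inter (hUo.mem_nhds hxU)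
      have hsub : U ∩ Set.range c ⊆ c '' Set.Iio m := by
        rintro y ⟨hyU, j, rfl⟩
        refine ⟨j, ?_, rfl⟩
        by_contra h
        simp only [Set.mem_Iio, not_lt] at h
        exact hcK j (hKmono h (hUK ⟨hyU, subset_closure (hcC j)⟩))
      exact (((Set.finite_Iio m).image c).subset hsub)
    · apply aux_disjoint_of_finite_inter (isClosed_closure.isOpen_compl.mem_nhds hx)
      have : (closure C)ᶜ ∩ Set.range c = ∅ := by
        apply Set.eq_empty_iff_forall_notMem.2
        rintro y ⟨hy1, j, rfl⟩
        exact hy1 (subset_closure (hcC j))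
      rw [this]; exact Set.finite_empty
  have hfin : (Set.range c).Finite := by
    refine (hB (Set.range c) (Set.countable_range c) htI).subset ?_
    rintro y ⟨j, rfl⟩
    exact ⟨hCB (hcC j), ⟨j, rfl⟩⟩
  -- every element of range c is in some K m
  have hmem : ∀ y ∈ Set.range c, ∃ m, y ∈ K m := by
    rintro y ⟨j, rfl⟩
    obtain ⟨m, U, _, hxU, hUK⟩ := hKnbhd (c j) (subset_closure (hcC j))
    exact ⟨m, hUK ⟨hxU, subset_closure (hcC j)⟩⟩
  have key : ∀ s : Set X, s.Finite → (∀ y ∈ s, ∃ m, y ∈ K m) → ∃ M, s ⊆ K M := by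
    intro s hs
    induction s, hs using Set.Finite.induction_on with
    | empty => exact fun _ => ⟨0, Set.empty_subset _⟩
    | @insert a s' _ _ ih =>
      intro h
      obtain ⟨M, hM⟩ := ih (fun y hy => h y (Set.mem_insert_of_mem a hy))
      obtain ⟨m, hm⟩ := h a (Set.mem_insert a s')
      refine ⟨max M m, ?_⟩
      rintro y (rfl | hy)
      · exact hKmono (le_max_right M m) hm
      · exact hKmono (le_max_left M m) (hM hy)
  obtain ⟨M, hM⟩ := key _ hfin hmem
  exact hcK M (hM ⟨M, rfl⟩)

end Aux

/-- PID implies that every locally compact Hausdorff space either is the union of countably many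
ω-bounded subspaces, or has an uncountable closed discrete subspace, or has a separable subspace
whose closure is not Lindelöf. -/
theorem pid_implies_ent (hPID : PID.{u})
    (X : Type u) [TopologicalSpace X] [LocallyCompactSpace X] [T2Space X] :
    (∃ A : ℕ → Set X, (⋃ n, A n) = Set.univ ∧ ∀ n, OmegaBounded (A n)) ∨
    (∃ D : Set X, ¬ D.Countable ∧ IsClosed D ∧ DiscreteTopology D) ∨
    (∃ S : Set X, (∃ c ⊆ S, c.Countable ∧ S ⊆ closure c) ∧ ¬ IsLindelof (closure S)) := by
  classical
  -- dispose of the countable case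
  by_cases hcX : Countable X
  · left
    rcases isEmpty_or_nonempty X with h | h
    · refine ⟨fun _ => ∅, ?_, ?_⟩
      · have : (Set.univ : Set X) = ∅ := Set.univ_eq_empty_iff.2 h
        simp [this]
      · intro n B hB _
        rw [Set.inter_empty]
        exact isCompact_empty
    · obtain ⟨g, hg⟩ := exists_surjective_nat X
      refine ⟨fun n => {g n}, ?_, ?_⟩
      · apply Set.eq_univ_iff_forall.2
        intro x
        obtain ⟨n, hn⟩ := hg x
        exact Set.mem_iUnion.2 ⟨n, by simp [hn]⟩
      · intro n B _ _
        exact ((Set.finite_singleton (g n)).subset Set.inter_subset_right).isCompact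
  have hUnc : Uncountable X := not_countable_iff.1 hcX
  -- dispose of the third alternative
  by_cases h3 : ∃ S : Set X, (∃ c ⊆ S, c.Countable ∧ S ⊆ closure c) ∧ ¬ IsLindelof (closure S)
  · exact Or.inr (Or.inr h3)
  push_neg at h3
  have hLin : ∀ c : Set X, c.Countable → IsLindelof (closure c) := fun c hc =>
    h3 c ⟨c, Set.Subset.rfl, hc, subset_closure⟩
  -- the P-ideal of countable closed discrete subsets
  set I : Set (Set X) := {s | s.Countable ∧ ∀ x, Disjoint (𝓝[≠] x) (𝓟 s)} with hI
  have hIc : ∀ s ∈ I, s.Countable := fun s hs => hs.1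
  have hIdown : ∀ s ∈ I, ∀ t ⊆ s, t ∈ I := by
    rintro s ⟨hsc, hsd⟩ t hts
    exact ⟨hsc.mono hts, fun x => (hsd x).mono_right (Filter.principal_mono.2 hts)⟩
  have hIP : ∀ f : ℕ → Set X, (∀ n, f n ∈ I) → ∃ J ∈ I, ∀ n, (f n \ J).Finite := by
    intro f hf
    set S : Set X := ⋃ n, f n with hS
    have hSc : S.Countable := Set.countable_iUnion (fun n => (hf n).1)
    obtain ⟨K, hKmono, hKcomp, hKnbhd⟩ := aux_exists_exhaustion (hLin S hSc)
    set J : Set X := ⋃ n, f n \ K n with hJ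
    have hJS : J ⊆ closure S := by
      rintro y hy
      obtain ⟨n, hyn⟩ := Set.mem_iUnion.1 hy
      exact subset_closure (Set.mem_iUnion.2 ⟨n, hyn.1⟩)
    refine ⟨J, ⟨hSc.mono ?_, ?_⟩, ?_⟩
    · rintro y hy
      obtain ⟨n, hyn⟩ := Set.mem_iUnion.1 hy
      exact Set.mem_iUnion.2 ⟨n, hyn.1⟩
    · intro x
      by_cases hx : x ∈ closure S
      · obtain ⟨m, U, hUo, hxU, hUK⟩ := hKnbhd x hx
        apply aux_disjoint_of_finite_inter (hUo.mem_nhds hxU)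
        have hsub : U ∩ J ⊆ ⋃ n ∈ Set.Iio m, (f n ∩ K m) := by
          rintro y ⟨hyU, hyJ⟩
          obtain ⟨n, hyn⟩ := Set.mem_iUnion.1 hyJ
          have hyK : y ∈ K m := hUK ⟨hyU, hJS hyJ⟩
          have hnm : n < m := by
            by_contra h
            push_neg at h
            exact hyn.2 (hKmono h hyK)
          exact Set.mem_biUnion hnm ⟨hyn.1, hyK⟩
        exact ((Set.finite_Iio m).biUnion
          (fun n _ => aux_finite_inter_compact (hf n).2 (hKcomp m))).subset hsub
      · apply aux_disjoint_of_finite_inter (isClosed_closure.isOpen_compl.mem_nhds hx)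
        have : (closure S)ᶜ ∩ J = ∅ :=
          Set.eq_empty_iff_forall_notMem.2 (fun y ⟨hy1, hy2⟩ => hy1 (hJS hy2))
        rw [this]; exact Set.finite_empty
    · intro n
      refine (aux_finite_inter_compact (hf n).2 (hKcomp n)).subset ?_
      rintro y ⟨hyf, hyJ⟩
      refine ⟨hyf, ?_⟩
      by_contra hK
      exact hyJ (Set.mem_iUnion.2 ⟨n, hyf, hK⟩)
  rcases hPID X hUnc I hIc hIdown hIP with ⟨A, hAunc, hA⟩ | ⟨B, hBu, hBorth⟩
  · -- uncountable closed discrete set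
    right; left
    refine ⟨A, hAunc, (isClosed_and_discrete_iff.2 ?_).imp_right isDiscrete_iff_discreteTopology.1⟩
    intro x
    obtain ⟨Kx, hKc, hKn⟩ := exists_compact_mem_nhds x
    apply aux_disjoint_of_finite_inter hKn
    by_contra hinf
    have hinf' : (Kx ∩ A).Infinite := hinf
    obtain emb := hinf'.natEmbedding
    set B : Set X := Set.range (fun n => (emb n : X)) with hBdef
    have hBA : B ⊆ A := by rintro y ⟨n, rfl⟩; exact (emb n).2.2
    have hBK : B ⊆ Kx := by rintro y ⟨n, rfl⟩; exact (emb n).2.1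
    have hBmem : B ∈ I := hA B hBA (Set.countable_range _)
    have hBfin : B.Finite := by
      have := aux_finite_inter_compact hBmem.2 hKc
      rwa [Set.inter_eq_left.2 hBK] at this
    exact (Set.infinite_range_of_injective
      (Subtype.coe_injective.comp emb.injective)) hBfin
  · -- σ-ω-bounded
    left
    refine ⟨fun n => {x | ∃ C, C ⊆ B n ∧ C.Countable ∧ x ∈ closure C}, ?_, ?_⟩
    · apply Set.eq_univ_iff_forall.2
      intro x
      have : x ∈ ⋃ n, B n := hBu ▸ Set.mem_univ x
      obtain ⟨n, hn⟩ := Set.mem_iUnion.1 this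
      exact Set.mem_iUnion.2 ⟨n, {x}, Set.singleton_subset_iff.2 hn,
        Set.countable_singleton x, subset_closure rfl⟩
    · intro n D hDA hDc
      have horth : ∀ s : Set X, s.Countable → (∀ x, Disjoint (𝓝[≠] x) (𝓟 s)) →
          (B n ∩ s).Finite := fun s hsc hsd => hBorth n s ⟨hsc, hsd⟩
      have : Countable ↥D := hDc.to_subtype
      choose Cfun hC1 hC2 hC3 using fun d : D => hDA d.2
      set C : Set X := ⋃ d : D, Cfun d with hCdef
      have hCc : C.Countable := Set.countable_iUnion (fun d => hC2 d)
      have hCB : C ⊆ B n := Set.iUnion_subset (fun d => hC1 d)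
      have hcc : IsCompact (closure C) := aux_compact_closure hLin horth hCB hCc
      have hDsub : D ⊆ closure C := fun x hx =>
        closure_mono (Set.subset_iUnion Cfun ⟨x, hx⟩) (hC3 ⟨x, hx⟩)
      have hclD : closure D ⊆ closure C := closure_minimal hDsub isClosed_closure
      have hDAn : closure D ⊆ {x | ∃ C, C ⊆ B n ∧ C.Countable ∧ x ∈ closure C} :=
        fun x hx => ⟨C, hCB, hCc, hclD hx⟩
      rw [Set.inter_eq_left.2 hDAn]
      exact hcc.of_isClosed_subset isClosed_closure hclD
end
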